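/- For constants k₀ ≠ 0, a, b, the function U(t,x) = a + k₀² / (√(4a² + k₀²) · cosh(z) + 2a), where z = k₀ x − k₀(6a² + k₀²) t + b, is a solution of the mKdV equation U_t + 6U² U_x + U_{xxx} = 0 (on the domain where the denominator is nonzero). -/

import Mathlib

noncomputable def Dd (s a y : ℝ) : ℝ := s * Real.cosh y + 2 * a
noncomputable def g0 (k s a y : ℝ) : ℝ := a + k^2 / Dd s a y
noncomputable def g1 (k s a y : ℝ) : ℝ := -(k^2 * s * Real.sinh y) / (Dd s a y)^2
noncomputable def g2 (k s a y : ℝ) : ℝ :=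
  -(k^2 * s) * (Real.cosh y * Dd s a y - 2 * s * (Real.sinh y)^2) / (Dd s a y)^3
noncomputable def g3 (k s a y : ℝ) : ℝ :=
  -(k^2 * s) * Real.sinh y *
    ((Dd s a y)^2 - 6 * s * Real.cosh y * Dd s a y + 6 * s^2 * (Real.sinh y)^2) / (Dd s a y)^4

lemma hasDerivAt_Dd (s a y : ℝ) : HasDerivAt (Dd s a) (s * Real.sinh y) y := by
  exact ((Real.hasDerivAt_cosh y).const_mul s).add_const (2*a)

lemma hasDerivAt_g0 (k s a y : ℝ) (h : Dd s a y ≠ 0) :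
    HasDerivAt (g0 k s a) (g1 k s a y) y := by
  have := ((hasDerivAt_const y (k^2)).div (hasDerivAt_Dd s a y) h).const_add a
  refine this.congr_deriv ?_
  unfold g1
  field_simp
  ring

lemma hasDerivAt_g1 (k s a y : ℝ) (h : Dd s a y ≠ 0) :
    HasDerivAt (g1 k s a) (g2 k s a y) y := by
  have hnum : HasDerivAt (fun y => -(k^2 * s * Real.sinh y)) (-(k^2 * s * Real.cosh y)) y := by
    exact ((Real.hasDerivAt_sinh y).const_mul (k^2*s)).neg
  have hden : HasDerivAt (fun y => (Dd s a y)^2) (2 * Dd s a y ^ 1 * (s * Real.sinh y)) y :=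
    (hasDerivAt_Dd s a y).pow 2
  have h2 : (Dd s a y)^2 ≠ 0 := pow_ne_zero _ h
  have := hnum.div hden h2
  refine this.congr_deriv ?_
  unfold g2
  field_simp
  ring

lemma hasDerivAt_g2 (k s a y : ℝ) (h : Dd s a y ≠ 0) :
    HasDerivAt (g2 k s a) (g3 k s a y) y := by
  have hnum := (((Real.hasDerivAt_cosh y).mul (hasDerivAt_Dd s a y)).sub
      (((Real.hasDerivAt_sinh y).pow 2).const_mul (2 * s))).const_mul (-(k^2 * s))
  have hden : HasDerivAt (fun y => (Dd s a y)^3) (3 * Dd s a y ^ 2 * (s * Real.sinh y)) y :=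
    (hasDerivAt_Dd s a y).pow 3
  have h3 : (Dd s a y)^3 ≠ 0 := pow_ne_zero _ h
  have := hnum.div hden h3
  refine this.congr_deriv ?_
  unfold g3
  simp only [Pi.mul_apply, Pi.sub_apply, Pi.pow_apply]
  field_simp
  ring

/-- One-soliton solution of the mKdV equation `U_t + 6U²U_x + U_{xxx} = 0`. -/
theorem stmt_4 (k₀ a b : ℝ) (hk₀ : k₀ ≠ 0) (U : ℝ → ℝ → ℝ)
    (hU : ∀ t x, U t x = a + k₀^2 /
      (Real.sqrt (4 * a^2 + k₀^2) * Real.cosh (k₀ * x - k₀ * (6 * a^2 + k₀^2) * t + b) + 2 * a)) :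
    ∀ t x, Real.sqrt (4 * a^2 + k₀^2) * Real.cosh (k₀ * x - k₀ * (6 * a^2 + k₀^2) * t + b)
        + 2 * a ≠ 0 →
      deriv (fun s => U s x) t + 6 * (U t x)^2 * deriv (U t) x
        + iteratedDeriv 3 (U t) x = 0 := by
  intro t x hD0
  set s : ℝ := Real.sqrt (4 * a^2 + k₀^2) with hs
  have hs2 : s^2 = 4 * a^2 + k₀^2 := Real.sq_sqrt (by positivity)
  set c : ℝ := 6 * a^2 + k₀^2 with hc
  -- inner functions
  set z : ℝ → ℝ → ℝ := fun t x => k₀ * x - k₀ * c * t + b with hz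
  have hDz : Dd s a (z t x) ≠ 0 := hD0
  have hUx : ∀ t x, U t x = g0 k₀ s a (z t x) := by
    intro t x; rw [hU]; rfl
  -- inner derivatives
  have hinnx : ∀ t x, HasDerivAt (fun x' => z t x') k₀ x := by
    intro t x
    have : HasDerivAt (fun x' => k₀ * x' - k₀ * c * t + b) (k₀ * 1) x :=
      (((hasDerivAt_id x).const_mul k₀).sub_const (k₀ * c * t)).add_const b
    simpa [hz] using this
  have hinnt : HasDerivAt (fun t' => z t' x) (-(k₀ * c)) t := by
    have : HasDerivAt (fun t' => k₀ * x - k₀ * c * t' + b) (0 - k₀ * c * 1) t :=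
      ((hasDerivAt_const t (k₀ * x)).sub ((hasDerivAt_id t).const_mul (k₀ * c))).add_const b
    simpa [hz] using this
  -- t-derivative
  have hUt : deriv (fun t' => U t' x) t = g1 k₀ s a (z t x) * (-(k₀ * c)) := by
    have : (fun t' => U t' x) = fun t' => g0 k₀ s a (z t' x) := funext fun t' => hUx t' x
    rw [this]
    exact (((hasDerivAt_g0 k₀ s a _ hDz).comp t hinnt)).deriv
  -- open neighborhood where Dd ≠ 0
  have hcont : Continuous (fun x' => Dd s a (z t x')) := by
    unfold Dd
    fun_prop
  have hV : ∀ᶠ x' in nhds x, Dd s a (z t x') ≠ 0 := hcont.continuousAt.eventually_ne hDz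
  have hUteq : U t = fun x' => g0 k₀ s a (z t x') := funext fun x' => hUx t x'
  -- first x-derivative, eventually
  have E1 : deriv (U t) =ᶠ[nhds x] fun x' => g1 k₀ s a (z t x') * k₀ := by
    filter_upwards [hV] with x' h
    rw [hUteq]
    exact ((hasDerivAt_g0 k₀ s a _ h).comp x' (hinnx t x')).deriv
  have hUx1 : deriv (U t) x = g1 k₀ s a (z t x) * k₀ := by
    rw [hUteq]
    exact ((hasDerivAt_g0 k₀ s a _ hDz).comp x (hinnx t x)).deriv
  -- second derivative eventually
  have E2 : deriv (deriv (U t)) =ᶠ[nhds x] fun x' => g2 k₀ s a (z t x') * k₀ * k₀ := by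
    refine E1.deriv.trans ?_
    filter_upwards [hV] with x' h
    exact (((hasDerivAt_g1 k₀ s a _ h).comp x' (hinnx t x')).mul_const k₀).deriv
  -- third derivative at x
  have hUx3 : iteratedDeriv 3 (U t) x = g3 k₀ s a (z t x) * k₀ * k₀ * k₀ := by
    have : iteratedDeriv 3 (U t) x = deriv (deriv (deriv (U t))) x := by
      simp [iteratedDeriv_succ, iteratedDeriv_zero]
    rw [this, E2.deriv_eq]
    exact ((((hasDerivAt_g2 k₀ s a _ hDz).comp x (hinnx t x)).mul_const k₀).mul_const k₀).deriv
  rw [hUt, hUx1, hUx3, hUx t x]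
  set y := z t x with hy
  have hCS : Real.cosh y ^ 2 = Real.sinh y ^ 2 + 1 := by
    have := Real.cosh_sq y; linarith
  simp only [g0, g1, g2, g3]
  have hD : Dd s a y = s * Real.cosh y + 2 * a := rfl
  set C := Real.cosh y
  set S := Real.sinh y
  rw [hD] at hDz ⊢
  field_simp
  linear_combination (k₀^3*s*S*(s*C+2*a)^2) * hc + (6*k₀^5*s*S) * hs2 + (6*k₀^5*s^3*S) * hCS
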